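/- Let r ≥ 3 and let H be an r-uniform r-partite linear hypergraph containing no rainbow cycles of length three or four. If A_1, …, A_6 are six distinct edges of H with |A_1 ∪ ⋯ ∪ A_6| ≤ 6r−9, then |A_1 ∪ ⋯ ∪ A_6| = 6r−9; moreover, exactly nine vertices of A_1 ∪ ⋯ ∪ A_6 belong to exactly two of the edges A_1, …, A_6, and the remaining 6r−18 vertices belong to exactly one of them. -/

import Mathlib

open Finset

/-- `H` (an `r`-uniform `r`-partite hypergraph with parts given by `part`) contains a rainbow
cycle of length `k`: `k` distinct vertices and `k` distinct edges, with `vᵢ, vᵢ₊₁ ∈ Aᵢ`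
(cyclically), and the `k` vertices lying in `k` distinct vertex parts. -/
def HasRainbowCycle {V : Type*} {r : ℕ} (H : Finset (Finset V)) (part : V → Fin r)
    (k : ℕ) : Prop :=
  ∃ (v : Fin k → V) (A : Fin k → Finset V),
    Function.Injective v ∧ Function.Injective A ∧
    (∀ i, A i ∈ H) ∧
    (∀ i : Fin k, v i ∈ A i ∧ v (finRotate k i) ∈ A i) ∧
    Function.Injective (fun i => part (v i))

lemma mantel6 (P : Finset (Finset (Fin 6))) (h2 : ∀ p ∈ P, p.card = 2)
    (htri : ∀ a b c : Fin 6, ({a,b} : Finset (Fin 6)) ∈ P → ({b,c} : Finset (Fin 6)) ∈ P →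
      ({a,c} : Finset (Fin 6)) ∈ P → False) :
    P.card ≤ 9 := by
  classical
  set deg : Fin 6 → ℕ := fun x => (P.filter (fun p => x ∈ p)).card with hdeg
  set Nb : Fin 6 → Finset (Fin 6) := fun x => univ.filter (fun y => ({x,y} : Finset (Fin 6)) ∈ P) with hNb
  have hne : ∀ x y : Fin 6, ({x,y} : Finset (Fin 6)) ∈ P → x ≠ y := by
    intro x y h hxy
    have := h2 _ h
    subst hxy
    simp at this
  have hdegNb : ∀ x, deg x = (Nb x).card := by
    intro x
    rw [hdeg]
    symm
    apply Finset.card_bij (fun y _ => ({x,y} : Finset (Fin 6)))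
    · intro y hy
      simp [hNb] at hy
      simp [hy]
    · intro y hy y' hy' hyy
      simp [hNb] at hy hy'
      have h1 : y ∈ ({x, y'} : Finset (Fin 6)) := hyy ▸ (by simp)
      simp at h1
      rcases h1 with h | h
      · exact absurd h (hne _ _ hy).symm
      · exact h
    · intro p hp
      simp at hp
      obtain ⟨a, b, hab, rfl⟩ := Finset.card_eq_two.1 (h2 _ hp.1)
      rcases (by simpa using hp.2 : x = a ∨ x = b) with rfl | rfl
      · exact ⟨b, by simp [hNb, hp.1], rfl⟩
      · refine ⟨a, ?_, by rw [Finset.pair_comm]⟩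
        simp only [hNb, mem_filter, mem_univ, true_and]
        rw [Finset.pair_comm]
        exact hp.1
  -- choose vertex of max degree
  obtain ⟨x, -, hx⟩ := Finset.exists_max_image (univ : Finset (Fin 6)) deg ⟨0, mem_univ 0⟩
  have hmax : ∀ y, deg y ≤ deg x := fun y => hx y (mem_univ y)
  -- every edge has an endpoint outside Nb x
  have hsub : P ⊆ (univ \ Nb x).biUnion (fun y => P.filter (fun p => y ∈ p)) := by
    intro p hp
    by_contra hcon
    simp only [mem_biUnion, not_exists] at hcon
    obtain ⟨a, b, hab, rfl⟩ := Finset.card_eq_two.1 (h2 _ hp)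
    have ha : a ∈ Nb x := by
      by_contra h
      exact hcon a ⟨by simp [mem_sdiff, h], by simp [hp]⟩
    have hb : b ∈ Nb x := by
      by_contra h
      exact hcon b ⟨by simp [mem_sdiff, h], by simp [hp]⟩
    simp [hNb] at ha hb
    exact htri a x b (by rwa [Finset.pair_comm]) hb hp
  have hm : P.card ≤ (6 - deg x) * deg x := by
    calc P.card ≤ ((univ \ Nb x).biUnion (fun y => P.filter (fun p => y ∈ p))).card :=
          Finset.card_le_card hsub
      _ ≤ ∑ y ∈ univ \ Nb x, (P.filter (fun p => y ∈ p)).card := Finset.card_biUnion_le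
      _ ≤ (univ \ Nb x).card * deg x := by
          apply Finset.sum_le_card_nsmul
          intro y _
          exact hmax y
      _ = (6 - deg x) * deg x := by
          rw [Finset.card_sdiff_of_subset (subset_univ _), hdegNb x]
          simp
  have hd6 : deg x ≤ 6 := by
    rw [hdegNb]
    simpa using Finset.card_le_card (subset_univ (Nb x))
  have : (6 - deg x) * deg x ≤ 9 := by interval_cases h : deg x <;> norm_num
  omega

lemma parts_ne' {V : Type*} [DecidableEq V] {r : ℕ} {H : Finset (Finset V)} {part : V → Fin r}
    (hpart : ∀ A ∈ H, ∀ i : Fin r, (A.filter fun x => part x = i).card = 1)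
    {E : Finset V} (hE : E ∈ H) {u w : V} (hu : u ∈ E) (hw : w ∈ E) (huw : u ≠ w) :
    part u ≠ part w := by
  intro hp
  have h1 := hpart E hE (part w)
  have h2 : ({u, w} : Finset V) ⊆ E.filter (fun a => part a = part w) := by
    intro a ha
    simp only [mem_insert, mem_singleton] at ha
    rcases ha with rfl | rfl <;> simp [mem_filter, hu, hw, hp]
  have := Finset.card_le_card h2
  rw [Finset.card_pair huw, h1] at this
  omega

lemma tri_common {V : Type*} [DecidableEq V] {r : ℕ} {H : Finset (Finset V)} {part : V → Fin r}
    (hpart : ∀ A ∈ H, ∀ i : Fin r, (A.filter fun x => part x = i).card = 1)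
    (h3 : ¬ HasRainbowCycle H part 3)
    {B C D : Finset V} (hB : B ∈ H) (hC : C ∈ H) (hD : D ∈ H)
    (hBC : B ≠ C) (hCD : C ≠ D) (hBD : B ≠ D)
    {x y z : V} (hxB : x ∈ B) (hxC : x ∈ C) (hyC : y ∈ C) (hyD : y ∈ D)
    (hzB : z ∈ B) (hzD : z ∈ D) : ∃ u, u ∈ B ∧ u ∈ C ∧ u ∈ D := by
  by_cases hxy : x = y
  · exact ⟨x, hxB, hxC, hxy ▸ hyD⟩
  by_cases hyz : y = z
  · exact ⟨y, hyz ▸ hzB, hyC, hyD⟩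
  by_cases hxz : x = z
  · exact ⟨x, hxB, hxC, hxz ▸ hzD⟩
  exfalso
  have pxy : part x ≠ part y := parts_ne' hpart hC hxC hyC hxy
  have pyz : part y ≠ part z := parts_ne' hpart hD hyD hzD hyz
  have pxz : part x ≠ part z := parts_ne' hpart hB hxB hzB hxz
  apply h3
  have e0 : finRotate 3 0 = 1 := by decide
  have e1 : finRotate 3 1 = 2 := by decide
  have e2 : finRotate 3 2 = 0 := by decide
  refine ⟨![x, y, z], ![C, D, B], ?_, ?_, ?_, ?_, ?_⟩
  · intro a b hab
    fin_cases a <;> fin_cases b <;> simp_all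
  · intro a b hab
    fin_cases a <;> fin_cases b <;> simp_all
  · intro i
    fin_cases i <;> simp [hB, hC, hD]
  · intro i
    fin_cases i <;> simp [e0, e1, e2, hxC, hyC, hyD, hzD, hzB, hxB]
  · intro a b hab
    simp only at hab
    fin_cases a <;> fin_cases b <;> simp_all

theorem six_edges_classification {V : Type*} [DecidableEq V] (r : ℕ) (hr : 3 ≤ r)
    (H : Finset (Finset V)) (part : V → Fin r)
    (hpart : ∀ A ∈ H, ∀ i : Fin r, (A.filter fun x => part x = i).card = 1)
    (hlin : ∀ A ∈ H, ∀ B ∈ H, A ≠ B → (A ∩ B).card ≤ 1)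
    (h3 : ¬ HasRainbowCycle H part 3) (h4 : ¬ HasRainbowCycle H part 4)
    (A : Fin 6 → Finset V) (hA : ∀ i, A i ∈ H) (hinj : Function.Injective A)
    (hcard : ((Finset.univ : Finset (Fin 6)).biUnion A).card ≤ 6 * r - 9) :
    ((Finset.univ : Finset (Fin 6)).biUnion A).card = 6 * r - 9 ∧
    (((Finset.univ : Finset (Fin 6)).biUnion A).filter
        (fun x => (Finset.univ.filter (fun i => x ∈ A i)).card = 2)).card = 9 ∧
    (((Finset.univ : Finset (Fin 6)).biUnion A).filter
        (fun x => (Finset.univ.filter (fun i => x ∈ A i)).card = 1)).card = 6 * r - 18 := by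
  have tri_common : ∀ {B C D : Finset V}, B ∈ H → C ∈ H → D ∈ H →
      B ≠ C → C ≠ D → B ≠ D →
      ∀ {x y z : V}, x ∈ B → x ∈ C → y ∈ C → y ∈ D → z ∈ B → z ∈ D →
        ∃ u, u ∈ B ∧ u ∈ C ∧ u ∈ D :=
    by
    intro B C D hB hC hD h1 h2 h3' x y z hx1 hx2 hy1 hy2 hz1 hz2
    exact _root_.tri_common hpart h3 hB hC hD h1 h2 h3' hx1 hx2 hy1 hy2 hz1 hz2
  classical
  set N := (univ : Finset (Fin 6)).biUnion A with hN
  set S : V → Finset (Fin 6) := fun v => univ.filter (fun i => v ∈ A i) with hS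
  have hSmem : ∀ v i, i ∈ S v ↔ v ∈ A i := by intro v i; simp [hS]
  have huniq : ∀ i j : Fin 6, i ≠ j → ∀ v w : V, v ∈ A i → v ∈ A j → w ∈ A i → w ∈ A j → v = w := by
    intro i j hij v w hvi hvj hwi hwj
    by_contra hvw
    have h1 := hlin (A i) (hA i) (A j) (hA j) (fun h => hij (hinj h))
    have h2 : ({v, w} : Finset V) ⊆ A i ∩ A j := by
      intro a ha
      simp only [mem_insert, mem_singleton] at ha
      rcases ha with rfl | rfl <;> simp [hvi, hvj, hwi, hwj]
    have := Finset.card_le_card h2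
    rw [Finset.card_pair hvw] at this
    omega
  have hAr : ∀ i, (A i).card = r := by
    intro i
    rw [Finset.card_eq_sum_card_fiberwise (f := part) (t := univ) (fun x _ => mem_univ _)]
    simp [hpart (A i) (hA i)]
  have hsub : ∀ i, A i ⊆ N := by
    intro i x hx
    exact mem_biUnion.2 ⟨i, mem_univ i, hx⟩
  have hsum : ∑ v ∈ N, (S v).card = 6 * r := by
    have h1 : ∀ v ∈ N, (S v).card = ∑ i ∈ (univ : Finset (Fin 6)), if v ∈ A i then 1 else 0 := by
      intro v _
      rw [hS]
      exact Finset.card_filter _ _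
    rw [Finset.sum_congr rfl h1, Finset.sum_comm]
    have h2 : ∀ i : Fin 6, (∑ v ∈ N, if v ∈ A i then 1 else 0) = r := by
      intro i
      rw [← Finset.card_filter]
      have : N.filter (fun v => v ∈ A i) = A i := by
        ext x
        simp only [mem_filter]
        exact ⟨fun h => h.2, fun h => ⟨hsub i h, h⟩⟩
      rw [this, hAr]
    rw [Finset.sum_congr rfl (fun i _ => h2 i)]
    simp [Finset.card_univ, mul_comm]
  have htge1 : ∀ v ∈ N, 1 ≤ (S v).card := by
    intro v hv
    obtain ⟨i, -, hi⟩ := mem_biUnion.1 hv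
    exact Finset.card_pos.2 ⟨i, (hSmem v i).2 hi⟩
  have hE : (∑ v ∈ N, ((S v).card - 1)) + N.card = 6 * r := by
    rw [← hsum]
    have heq : (∑ v ∈ N, ((S v).card - 1)) + N.card = ∑ v ∈ N, (((S v).card - 1) + 1) := by
      rw [Finset.sum_add_distrib, Finset.sum_const, smul_eq_mul, mul_one]
    rw [heq]
    exact Finset.sum_congr rfl fun v hv => Nat.sub_add_cancel (htge1 v hv)
  have hE9 : 9 ≤ ∑ v ∈ N, ((S v).card - 1) := by omega
  -- case distinction
  by_cases hcase : ∃ v ∈ N, 3 ≤ (S v).card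
  · -- derive a contradiction
    exfalso
    obtain ⟨v₀, hv₀N, hv₀3⟩ := hcase
    set S₀ := S v₀ with hS₀
    set T := (univ : Finset (Fin 6)) \ S₀ with hT
    have hTcard : T.card = 6 - S₀.card := by
      rw [hT, Finset.card_sdiff_of_subset (subset_univ _)]
      simp
    set Pv : V → Finset (Finset (Fin 6)) := fun v => (S v).powersetCard 2 with hPv
    have hchoose : ∀ n : ℕ, n - 1 ≤ n.choose 2 := by
      intro n
      cases n with
      | zero => simp
      | succ m =>
        rw [Nat.succ_sub_one, Nat.choose_succ_succ]
        have h := Nat.choose_one_right m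
        omega
    have hPvdisj : ∀ v ∈ N.erase v₀, ∀ w ∈ N.erase v₀, v ≠ w → Disjoint (Pv v) (Pv w) := by
      intro v _ w _ hvw
      rw [Finset.disjoint_left]
      intro p hp hq
      rw [hPv] at hp hq
      simp only [Finset.mem_powersetCard] at hp hq
      obtain ⟨i, j, hij, rfl⟩ := Finset.card_eq_two.1 hp.2
      have hiv : v ∈ A i := (hSmem v i).1 (hp.1 (by simp))
      have hjv : v ∈ A j := (hSmem v j).1 (hp.1 (by simp))
      have hiw : w ∈ A i := (hSmem w i).1 (hq.1 (by simp))
      have hjw : w ∈ A j := (hSmem w j).1 (hq.1 (by simp))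
      exact hvw (huniq i j hij v w hiv hjv hiw hjw)
    have hsplitE : ∑ v ∈ N, ((S v).card - 1)
        = ((S v₀).card - 1) + ∑ v ∈ N.erase v₀, ((S v).card - 1) :=
      (Finset.add_sum_erase N _ hv₀N).symm
    set U := (N.erase v₀).biUnion Pv with hU
    have hrest : ∑ v ∈ N.erase v₀, ((S v).card - 1) ≤ U.card := by
      rw [hU, Finset.card_biUnion hPvdisj]
      apply Finset.sum_le_sum
      intro v _
      rw [hPv]
      rw [Finset.card_powersetCard]
      exact hchoose _
    have hmemTg : ∀ c : Fin 6, c ∈ T ↔ c ∉ S₀ := by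
      intro c; rw [hT]; simp
    have hpT : ∀ p ∈ U, p.card = 2 ∧ ∃ v, v ∈ N ∧ v ≠ v₀ ∧ p ⊆ S v := by
      intro p hp
      rw [hU] at hp
      obtain ⟨v, hv, hpv⟩ := mem_biUnion.1 hp
      rw [hPv, Finset.mem_powersetCard] at hpv
      exact ⟨hpv.2, v, mem_of_mem_erase hv, ne_of_mem_erase hv, hpv.1⟩
    have hSvS₀ : ∀ v, v ≠ v₀ → ∀ i j : Fin 6, i ≠ j → i ∈ S v → j ∈ S v → i ∈ S₀ → j ∈ S₀ → False := by
      intro v hv i j hij hiv hjv hiS hjS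
      exact hv (huniq i j hij v v₀ ((hSmem v i).1 hiv) ((hSmem v j).1 hjv)
        ((hSmem v₀ i).1 hiS) ((hSmem v₀ j).1 hjS))
    have hnotS₀ : ∀ p ∈ U, ¬ p ⊆ S₀ := by
      intro p hp hpS
      obtain ⟨hp2, v, hvN, hvne, hpSv⟩ := hpT p hp
      obtain ⟨i, j, hij, rfl⟩ := Finset.card_eq_two.1 hp2
      exact hSvS₀ v hvne i j hij (hpSv (by simp)) (hpSv (by simp)) (hpS (by simp)) (hpS (by simp))
    have hsplitU : (U.filter (fun p => p ⊆ T)).card + (U.filter (fun p => ¬ p ⊆ T)).card = U.card :=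
      Finset.card_filter_add_card_filter_not _
    have h1 : (U.filter (fun p => p ⊆ T)).card ≤ (6 - S₀.card).choose 2 := by
      have hss : U.filter (fun p => p ⊆ T) ⊆ T.powersetCard 2 := by
        intro p hp
        rw [mem_filter] at hp
        rw [Finset.mem_powersetCard]
        exact ⟨hp.2, (hpT p hp.1).1⟩
      have := Finset.card_le_card hss
      rwa [Finset.card_powersetCard, hTcard] at this
    have hstruct : ∀ p ∈ U.filter (fun p => ¬ p ⊆ T),
        ∃ x y v, p = ({x, y} : Finset (Fin 6)) ∧ x ∈ T ∧ y ∈ S₀ ∧ v ∈ N ∧ v ≠ v₀ ∧ v ∈ A x ∧ v ∈ A y := by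
      intro p hp
      rw [mem_filter] at hp
      obtain ⟨hpU, hpnT⟩ := hp
      obtain ⟨hp2, v, hvN, hvne, hpSv⟩ := hpT p hpU
      obtain ⟨a, b, hab, rfl⟩ := Finset.card_eq_two.1 hp2
      have hmemT : ∀ c : Fin 6, c ∈ T ↔ c ∉ S₀ := by
        intro c; rw [hT]; simp
      have hva : v ∈ A a := (hSmem v a).1 (hpSv (by simp))
      have hvb : v ∈ A b := (hSmem v b).1 (hpSv (by simp))
      by_cases haS : a ∈ S₀
      · have hbT : b ∈ T := by
          rw [hmemT]
          intro hbS
          exact hSvS₀ v hvne a b hab (hpSv (by simp)) (hpSv (by simp)) haS hbS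
        exact ⟨b, a, v, Finset.pair_comm a b, hbT, haS, hvN, hvne, hvb, hva⟩
      · have haT : a ∈ T := (hmemT a).2 haS
        have hbS : b ∈ S₀ := by
          by_contra hbS
          exact hpnT (by
            intro c hc
            simp only [mem_insert, mem_singleton] at hc
            rcases hc with rfl | rfl
            · exact haT
            · exact (hmemT c).2 hbS)
        exact ⟨a, b, v, rfl, haT, hbS, hvN, hvne, hva, hvb⟩
    have hxT_notS₀ : ∀ c : Fin 6, c ∈ T → v₀ ∉ A c := by
      intro c hc
      rw [hT, mem_sdiff] at hc
      intro hv
      exact hc.2 ((hSmem v₀ c).2 hv)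
    have h2 : (U.filter (fun p => ¬ p ⊆ T)).card ≤ 6 - S₀.card := by
      have hinter : ∀ (x y : Fin 6), x ∈ T → y ∈ S₀ → ({x, y} : Finset (Fin 6)) ∩ T = {x} := by
        intro x y hxT hyS
        ext c
        simp only [mem_inter, mem_insert, mem_singleton]
        constructor
        · rintro ⟨rfl | rfl, hcT⟩
          · rfl
          · exact absurd hyS ((hmemTg c).1 hcT)
        · rintro rfl
          exact ⟨Or.inl rfl, hxT⟩
      calc (U.filter (fun p => ¬ p ⊆ T)).card ≤ (T.image Fin.val).card := by
            apply Finset.card_le_card_of_injOn (fun p => (p ∩ T).sup Fin.val)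
            · intro p hp
              obtain ⟨x, y, v, rfl, hxT, hyS, -⟩ := hstruct p hp
              simp only [Finset.mem_coe]
              rw [hinter x y hxT hyS]
              simp only [Finset.sup_singleton]
              exact mem_image_of_mem _ hxT
            · intro p hp q hq hpq
              obtain ⟨x, y, v, rfl, hxT, hyS, hvN, hvne, hvx, hvy⟩ := hstruct p hp
              obtain ⟨x', y', w, rfl, hxT', hyS', hwN, hwne, hwx, hwy⟩ := hstruct q hq
              simp only [hinter x y hxT hyS, hinter x' y' hxT' hyS', Finset.sup_singleton] at hpq
              have hxx : x = x' := Fin.val_injective hpq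
              subst hxx
              by_cases hyy : y = y'
              · rw [hyy]
              · exfalso
                have hv₀y : v₀ ∈ A y := (hSmem v₀ y).1 hyS
                have hv₀y' : v₀ ∈ A y' := (hSmem v₀ y').1 hyS'
                have hxy : x ≠ y := by
                  rintro rfl
                  exact hxT_notS₀ x hxT hv₀y
                have hxy' : x ≠ y' := by
                  rintro rfl
                  exact hxT_notS₀ x hxT hv₀y'
                obtain ⟨u, huX, huY, huY'⟩ := tri_common (hA x) (hA y) (hA y')
                  (fun h => hxy (hinj h)) (fun h => hyy (hinj h)) (fun h => hxy' (hinj h))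
                  hvx hvy hv₀y hv₀y' hwx hwy
                have : u = v₀ := huniq y y' hyy u v₀ huY huY' hv₀y hv₀y'
                exact hxT_notS₀ x hxT (this ▸ huX)
        _ = T.card := Finset.card_image_of_injective _ Fin.val_injective
        _ = 6 - S₀.card := hTcard
    -- now the arithmetic
    have hS₀6 : S₀.card ≤ 6 := by
      have := Finset.card_le_card (subset_univ S₀)
      simpa using this
    have hS₀3 : 3 ≤ S₀.card := hv₀3
    rw [← hS₀] at hsplitE
    have hfinal : ∑ v ∈ N, ((S v).card - 1) ≤ (S₀.card - 1) + ((6 - S₀.card).choose 2 + (6 - S₀.card)) := by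
      rw [hsplitE]
      omega
    have hb : ∀ a : ℕ, 3 ≤ a → a ≤ 6 → (a - 1) + ((6 - a).choose 2 + (6 - a)) ≤ 8 := by
      intro a h3 h6
      interval_cases a <;> decide
    have := hb S₀.card hS₀3 hS₀6
    omega
  · push_neg at hcase
    have ht2 : ∀ v ∈ N, (S v).card ≤ 2 := by
      intro v hv
      have := hcase v hv
      omega
    have hWpred : ∀ v : V, (univ.filter (fun i => v ∈ A i)).card = (S v).card := by
      intro v; rw [hS]
    set W := N.filter (fun x => (univ.filter (fun i => x ∈ A i)).card = 2) with hW
    set W1 := N.filter (fun x => (univ.filter (fun i => x ∈ A i)).card = 1) with hW1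
    have hNsplit : W.card + W1.card = N.card := by
      have hsplit := Finset.card_filter_add_card_filter_not
        (s := N) (p := fun x => (univ.filter (fun i => x ∈ A i)).card = 2)
      have heq : N.filter (fun x => ¬ (univ.filter (fun i => x ∈ A i)).card = 2)
          = N.filter (fun x => (univ.filter (fun i => x ∈ A i)).card = 1) := by
        apply Finset.filter_congr
        intro x hx
        have h1 := htge1 x hx
        have h2 := ht2 x hx
        rw [hWpred x]
        constructor
        · intro h; omega
        · intro h; omega
      rw [heq] at hsplit
      exact hsplit
    have hEW : ∑ v ∈ N, ((S v).card - 1) = W.card := by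
      rw [← Finset.sum_filter_add_sum_filter_not N
        (fun x => (univ.filter (fun i => x ∈ A i)).card = 2) (fun v => (S v).card - 1)]
      have hz : ∑ v ∈ N.filter (fun x => ¬ (univ.filter (fun i => x ∈ A i)).card = 2),
          ((S v).card - 1) = 0 := by
        apply Finset.sum_eq_zero
        intro v hv
        rw [mem_filter] at hv
        have h1 := htge1 v hv.1
        have h2 := ht2 v hv.1
        have h3 := hv.2
        rw [hWpred v] at h3
        omega
      have ho : ∑ v ∈ N.filter (fun x => (univ.filter (fun i => x ∈ A i)).card = 2),
          ((S v).card - 1) = W.card := by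
        rw [hW, Finset.card_eq_sum_ones]
        apply Finset.sum_congr rfl
        intro v hv
        rw [mem_filter] at hv
        have h3 := hv.2
        rw [hWpred v] at h3
        omega
      rw [hz, ho]
      omega
    have hWsub : ∀ v ∈ W, v ∈ N ∧ (S v).card = 2 := by
      intro v hv
      rw [hW, mem_filter] at hv
      exact ⟨hv.1, (hWpred v) ▸ hv.2⟩
    have hinjS : Set.InjOn S ↑W := by
      intro v hv w hw hvw
      obtain ⟨-, hv2⟩ := hWsub v hv
      obtain ⟨i, j, hij, hSv⟩ := Finset.card_eq_two.1 hv2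
      have hvi : v ∈ A i := (hSmem v i).1 (hSv ▸ (by simp : i ∈ ({i,j} : Finset (Fin 6))))
      have hvj : v ∈ A j := (hSmem v j).1 (hSv ▸ (by simp : j ∈ ({i,j} : Finset (Fin 6))))
      have hwi : w ∈ A i := (hSmem w i).1 ((hvw ▸ hSv) ▸ (by simp : i ∈ ({i,j} : Finset (Fin 6))))
      have hwj : w ∈ A j := (hSmem w j).1 ((hvw ▸ hSv) ▸ (by simp : j ∈ ({i,j} : Finset (Fin 6))))
      exact huniq i j hij v w hvi hvj hwi hwj
    set P := W.image S with hP
    have hPcard : P.card = W.card := Finset.card_image_of_injOn hinjS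
    have h2P : ∀ p ∈ P, p.card = 2 := by
      intro p hp
      obtain ⟨v, hv, rfl⟩ := mem_image.1 hp
      exact (hWsub v hv).2
    have htriP : ∀ a b c : Fin 6, ({a,b} : Finset (Fin 6)) ∈ P → ({b,c} : Finset (Fin 6)) ∈ P →
        ({a,c} : Finset (Fin 6)) ∈ P → False := by
      intro a b c hab hbc hac
      obtain ⟨u, huW, hu⟩ := mem_image.1 hab
      obtain ⟨v, hvW, hv⟩ := mem_image.1 hbc
      obtain ⟨w, hwW, hw⟩ := mem_image.1 hac
      have hab' : a ≠ b := by
        rintro rfl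
        have := (hWsub u huW).2
        rw [hu] at this
        simp at this
      have hbc' : b ≠ c := by
        rintro rfl
        have := (hWsub v hvW).2
        rw [hv] at this
        simp at this
      have hac' : a ≠ c := by
        rintro rfl
        have := (hWsub w hwW).2
        rw [hw] at this
        simp at this
      have hua : u ∈ A a := (hSmem u a).1 (hu ▸ (by simp : a ∈ ({a,b} : Finset (Fin 6))))
      have hub : u ∈ A b := (hSmem u b).1 (hu ▸ (by simp : b ∈ ({a,b} : Finset (Fin 6))))
      have hvb : v ∈ A b := (hSmem v b).1 (hv ▸ (by simp : b ∈ ({b,c} : Finset (Fin 6))))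
      have hvc : v ∈ A c := (hSmem v c).1 (hv ▸ (by simp : c ∈ ({b,c} : Finset (Fin 6))))
      have hwa : w ∈ A a := (hSmem w a).1 (hw ▸ (by simp : a ∈ ({a,c} : Finset (Fin 6))))
      have hwc : w ∈ A c := (hSmem w c).1 (hw ▸ (by simp : c ∈ ({a,c} : Finset (Fin 6))))
      obtain ⟨q, hqa, hqb, hqc⟩ := tri_common (hA a) (hA b) (hA c)
        (fun h => hab' (hinj h)) (fun h => hbc' (hinj h)) (fun h => hac' (hinj h))
        hua hub hvb hvc hwa hwc
      have hqN : q ∈ N := hsub a hqa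
      have habc : ({a, b, c} : Finset (Fin 6)) ⊆ S q := by
        intro x hx
        simp only [mem_insert, mem_singleton] at hx
        rcases hx with rfl | rfl | rfl
        · exact (hSmem q x).2 hqa
        · exact (hSmem q x).2 hqb
        · exact (hSmem q x).2 hqc
      have h3card : ({a, b, c} : Finset (Fin 6)).card = 3 := by
        rw [Finset.card_insert_of_notMem (by simp [hab', hac']),
          Finset.card_pair hbc']
      have := Finset.card_le_card habc
      rw [h3card] at this
      have := ht2 q hqN
      omega
    have h9 : W.card ≤ 9 := by
      rw [← hPcard]
      exact mantel6 P h2P htriP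
    refine ⟨?_, ?_, ?_⟩ <;> omega
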